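/- arXiv:2201.01924 — 2 statements merged into one kernel-verified Lean document; each statement's English description precedes it below -/
import Mathlib

section
/- Let C(t) = 1_{Y(t) ≤ G} Y(t) where Y(t) is geometric on {1,2,...} with success probability e^{-ρt} and G is independent geometric with success probability δ/ρ. Then E[C(t)] = e^{ρt} / (1 + δ(e^{ρt}-1)/ρ)^2. -/
open MeasureTheory Real
open scoped ENNReal

/-- Expectation of the typical cluster size `C(t) = 1_{Y(t) ≤ G} Y(t)`:
`E[C(t)] = e^{ρt} / (1 + δ(e^{ρt}-1)/ρ)^2`. -/
theorem expected_cluster_size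
    {Ω : Type*} [MeasurableSpace Ω] (ℙ : Measure Ω) [IsProbabilityMeasure ℙ]
    (ρ δ t : ℝ) (hδ : 0 < δ) (hδρ : δ ≤ ρ) (ht : 0 ≤ t)
    (Y G : Ω → ℕ) (hYmeas : Measurable Y) (hGmeas : Measurable G)
    (hYpos : ∀ ω, 1 ≤ Y ω) (hGpos : ∀ ω, 1 ≤ G ω)
    (hY : ∀ k : ℕ, 1 ≤ k →
      ℙ {ω | Y ω = k} = ENNReal.ofReal ((1 - exp (-ρ * t)) ^ (k - 1) * exp (-ρ * t)))
    (hG : ∀ k : ℕ, 1 ≤ k →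
      ℙ {ω | G ω = k} = ENNReal.ofReal ((δ / ρ) * (1 - δ / ρ) ^ (k - 1)))
    (hindep : ProbabilityTheory.IndepFun Y G ℙ) :
    ∫⁻ ω, (if Y ω ≤ G ω then (Y ω : ℝ≥0∞) else 0) ∂ℙ
      = ENNReal.ofReal (exp (ρ * t) / (1 + δ * (exp (ρ * t) - 1) / ρ) ^ 2) := by
  have hρ : 0 < ρ := lt_of_lt_of_le hδ hδρ
  set q := exp (-ρ * t) with hqdef
  have hq0 : 0 < q := exp_pos _
  have hq1 : q ≤ 1 := by
    rw [hqdef]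
    exact exp_le_one_iff.mpr (by nlinarith)
  set a := 1 - q with hadef
  have ha0 : 0 ≤ a := by simp [hadef]; linarith
  have ha1 : a < 1 := by simp [hadef]; linarith
  set r := 1 - δ / ρ with hrdef
  have hδρ1 : δ / ρ ≤ 1 := (div_le_one hρ).mpr hδρ
  have hr0 : 0 ≤ r := by simp [hrdef]; linarith
  have hr1 : r < 1 := by
    have : 0 < δ / ρ := div_pos hδ hρ
    simp [hrdef]; linarith
  set x := a * r with hxdef
  have hx0 : 0 ≤ x := mul_nonneg ha0 hr0
  have hx1 : x < 1 := by
    calc x ≤ a * 1 := by apply mul_le_mul_of_nonneg_left (le_of_lt hr1) ha0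
    _ < 1 := by simpa using ha1
  -- tail of G
  have hGtail : ∀ k : ℕ, ℙ (G ⁻¹' Set.Ici (k + 1)) = ENNReal.ofReal (r ^ k) := by
    intro k
    induction k with
    | zero =>
      have : G ⁻¹' Set.Ici 1 = Set.univ := by
        ext ω; simp [hGpos ω]
      simp [this]
    | succ k ih =>
      have hsplit : G ⁻¹' Set.Ici (k + 2) = G ⁻¹' Set.Ici (k + 1) \ G ⁻¹' {k + 1} := by
        ext ω
        simp only [Set.mem_preimage, Set.mem_Ici, Set.mem_diff, Set.mem_singleton_iff]
        omega
      have hGk : ℙ (G ⁻¹' {k + 1}) = ENNReal.ofReal ((δ / ρ) * r ^ k) := by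
        have := hG (k + 1) (by omega)
        simpa [Set.preimage, ← hrdef] using this
      rw [hsplit, measure_diff (fun ω hω => by
          simp only [Set.mem_preimage, Set.mem_singleton_iff] at hω
          simp [Set.mem_Ici, hω])
        ((hGmeas (MeasurableSet.singleton (k+1))).nullMeasurableSet) (measure_ne_top ℙ _),
        hGk, ih, ← ENNReal.ofReal_sub _ (mul_nonneg (by positivity) (pow_nonneg hr0 k))]
      congr 1
      rw [pow_succ, hrdef]
      ring
  -- measurable sets
  have hmeas : ∀ k : ℕ, MeasurableSet (Y ⁻¹' {k + 1} ∩ G ⁻¹' Set.Ici (k + 1)) := fun k =>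
    (hYmeas (MeasurableSet.singleton _)).inter (hGmeas measurableSet_Ici)
  -- pointwise decomposition
  have hpt : ∀ ω, (if Y ω ≤ G ω then (Y ω : ℝ≥0∞) else 0)
      = ∑' k : ℕ, Set.indicator (Y ⁻¹' {k + 1} ∩ G ⁻¹' Set.Ici (k + 1))
          (fun _ => ((k + 1 : ℕ) : ℝ≥0∞)) ω := by
    intro ω
    rw [tsum_eq_single (Y ω - 1) ?_]
    · have h1 : Y ω - 1 + 1 = Y ω := Nat.succ_pred_eq_of_pos (hYpos ω)
      by_cases h : Y ω ≤ G ω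
      · rw [if_pos h, Set.indicator_of_mem (by simp [h1, h])]
        simp [h1]
      · rw [if_neg h, Set.indicator_of_notMem (by simp [h1, h])]
    · intro k hk
      apply Set.indicator_of_notMem
      simp only [Set.mem_inter_iff, Set.mem_preimage, Set.mem_singleton_iff, not_and]
      intro hYk
      omega
  -- integrate
  have hint : ∫⁻ ω, (if Y ω ≤ G ω then (Y ω : ℝ≥0∞) else 0) ∂ℙ
      = ∑' k : ℕ, ((k + 1 : ℕ) : ℝ≥0∞) * ℙ (Y ⁻¹' {k + 1} ∩ G ⁻¹' Set.Ici (k + 1)) := by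
    rw [lintegral_congr hpt, lintegral_tsum (fun k =>
      (measurable_const.indicator (hmeas k)).aemeasurable)]
    congr 1
    funext k
    rw [lintegral_indicator_const (hmeas k)]
  -- independence
  have hYk : ∀ k : ℕ, ℙ (Y ⁻¹' {k + 1}) = ENNReal.ofReal (a ^ k * q) := by
    intro k
    have := hY (k + 1) (by omega)
    simpa [Set.preimage, ← hadef, ← hqdef] using this
  have hprod : ∀ k : ℕ, ℙ (Y ⁻¹' {k + 1} ∩ G ⁻¹' Set.Ici (k + 1))
      = ENNReal.ofReal (a ^ k * q) * ENNReal.ofReal (r ^ k) := by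
    intro k
    rw [hindep.measure_inter_preimage_eq_mul _ _ (MeasurableSet.singleton _) measurableSet_Ici,
      hYk k, hGtail k]
  -- the real series
  have hxnorm : ‖x‖ < 1 := by rw [Real.norm_eq_abs, abs_of_nonneg hx0]; exact hx1
  have h1x : 0 < 1 - x := by linarith
  have hf : HasSum (fun k : ℕ => (k + 1 : ℝ) * (a ^ k * q * r ^ k)) (q / (1 - x) ^ 2) := by
    have hs1 : HasSum (fun k : ℕ => (k : ℝ) * x ^ k) (x / (1 - x) ^ 2) :=
      hasSum_coe_mul_geometric_of_norm_lt_one hxnorm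
    have hs2 : HasSum (fun k : ℕ => x ^ k) ((1 - x)⁻¹) :=
      hasSum_geometric_of_norm_lt_one hxnorm
    have := (hs1.add hs2).mul_left q
    have heq : (fun k : ℕ => q * ((k : ℝ) * x ^ k + x ^ k))
        = fun k : ℕ => (k + 1 : ℝ) * (a ^ k * q * r ^ k) := by
      funext k
      rw [hxdef, mul_pow]
      ring
    rw [heq] at this
    convert this using 1
    · rfl
    field_simp
    ring
  -- combine the sum
  have hE : q * exp (ρ * t) = 1 := by
    rw [hqdef, ← Real.exp_add]
    norm_num
  have hE1 : 1 ≤ exp (ρ * t) := Real.one_le_exp (by positivity)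
  have hD : 0 < 1 + δ * (exp (ρ * t) - 1) / ρ := by
    have : 0 ≤ δ * (exp (ρ * t) - 1) / ρ :=
      div_nonneg (mul_nonneg hδ.le (by linarith)) hρ.le
    linarith
  have hkey : 1 - x = q * (1 + δ * (exp (ρ * t) - 1) / ρ) := by
    rw [hxdef, hadef, hrdef]
    field_simp
    nlinarith [hE]
  rw [hint]
  calc ∑' k : ℕ, ((k + 1 : ℕ) : ℝ≥0∞) * ℙ (Y ⁻¹' {k + 1} ∩ G ⁻¹' Set.Ici (k + 1))
      = ∑' k : ℕ, ENNReal.ofReal ((k + 1 : ℝ) * (a ^ k * q * r ^ k)) := by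
        congr 1
        funext k
        rw [hprod k, ← ENNReal.ofReal_mul (mul_nonneg (pow_nonneg ha0 k) hq0.le),
          ← ENNReal.ofReal_natCast (k + 1),
          ← ENNReal.ofReal_mul (by positivity)]
        congr 1
        push_cast
        ring
    _ = ENNReal.ofReal (q / (1 - x) ^ 2) := by
        rw [← ENNReal.ofReal_tsum_of_nonneg (fun k => mul_nonneg (by positivity)
          (mul_nonneg (mul_nonneg (pow_nonneg ha0 k) hq0.le) (pow_nonneg hr0 k)))
          hf.summable, hf.tsum_eq]
    _ = ENNReal.ofReal (exp (ρ * t) / (1 + δ * (exp (ρ * t) - 1) / ρ) ^ 2) := by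
        congr 1
        rw [hkey, mul_pow, div_eq_div_iff (by positivity) (by positivity)]
        linear_combination (-q * (1 + δ * (exp (ρ * t) - 1) / ρ) ^ 2) * hE
end

section
/- Define L(x) = (1-p)γ ∫_0^∞ e^{(ρ-x)t} / (1 + δ(e^{ρt}-1)/ρ)^2 dt for x > 0, where γ > 0, p ∈ (0,1), 0 < δ < (1-p)γ and ρ = δ + pγ. Then L is continuous and strictly decreasing on (0,∞), lim_{x→0+} L(x) = (1-p)γ/δ > 1, lim_{x→∞} L(x) = 0, and hence there exists a unique α ∈ (0,∞) with L(α) = 1. -/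
open MeasureTheory Real Filter Topology

private lemma exp_int {a : ℝ} (ha : 0 < a) :
    ∫ t in Set.Ioi (0:ℝ), Real.exp (-(a * t)) = 1 / a := by
  have hderiv : ∀ t ∈ Set.Ici (0:ℝ),
      HasDerivAt (fun t => -(Real.exp (-(a * t)) / a)) (Real.exp (-(a * t))) t := by
    intro t _
    have h1 : HasDerivAt (fun t : ℝ => -(a * t)) (-a) t := by
      simpa using (hasDerivAt_id t).const_mul (-a)
    have h2 := (h1.exp.div_const a).neg
    refine HasDerivAt.congr_deriv h2 ?_
    rw [mul_neg, neg_div, neg_neg, mul_div_assoc, div_self ha.ne', mul_one]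
  have hint : IntegrableOn (fun t => Real.exp (-(a * t))) (Set.Ioi 0) := by
    simpa [neg_mul] using exp_neg_integrableOn_Ioi 0 ha
  have htend : Tendsto (fun t => -(Real.exp (-(a * t)) / a)) atTop (𝓝 0) := by
    have h3 : Tendsto (fun t : ℝ => -(a * t)) atTop atBot :=
      tendsto_neg_atTop_atBot.comp (tendsto_id.const_mul_atTop ha)
    have := ((tendsto_exp_atBot.comp h3).div_const a).neg
    simpa using this
  have := integral_Ioi_of_hasDerivAt_of_tendsto' hderiv hint htend
  rw [this]
  norm_num

private lemma g_ge {δ ρ : ℝ} (hδ : 0 < δ) (hδρ : δ < ρ) (t : ℝ) :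
    δ / ρ * Real.exp (ρ * t) ≤ 1 + δ * (Real.exp (ρ * t) - 1) / ρ := by
  have hρ : 0 < ρ := hδ.trans hδρ
  have h : 1 + δ * (Real.exp (ρ * t) - 1) / ρ - δ / ρ * Real.exp (ρ * t) = (ρ - δ) / ρ := by
    field_simp
    ring
  nlinarith [div_pos (sub_pos.2 hδρ) hρ]

private lemma g_pos {δ ρ : ℝ} (hδ : 0 < δ) (hδρ : δ < ρ) (t : ℝ) :
    0 < 1 + δ * (Real.exp (ρ * t) - 1) / ρ := by
  have hρ : 0 < ρ := hδ.trans hδρ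
  have := g_ge hδ hδρ t
  nlinarith [Real.exp_pos (ρ * t), div_pos hδ hρ]

private lemma F_cont {δ ρ : ℝ} (hδ : 0 < δ) (hδρ : δ < ρ) (x : ℝ) :
    Continuous (fun t => Real.exp ((ρ - x) * t) / (1 + δ * (Real.exp (ρ * t) - 1) / ρ) ^ 2) := by
  apply Continuous.div
  · fun_prop
  · fun_prop
  · intro t
    exact pow_ne_zero 2 (g_pos hδ hδρ t).ne'

private lemma F_nonneg {δ ρ : ℝ} (hδ : 0 < δ) (hδρ : δ < ρ) (x t : ℝ) :
    0 ≤ Real.exp ((ρ - x) * t) / (1 + δ * (Real.exp (ρ * t) - 1) / ρ) ^ 2 := by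
  have := g_pos hδ hδρ t
  positivity

private lemma F_bound {δ ρ : ℝ} (hδ : 0 < δ) (hδρ : δ < ρ) {x t : ℝ} (hx : 0 ≤ x) (ht : 0 ≤ t) :
    Real.exp ((ρ - x) * t) / (1 + δ * (Real.exp (ρ * t) - 1) / ρ) ^ 2
      ≤ (ρ / δ) ^ 2 * Real.exp (-(ρ * t)) := by
  have hρ : 0 < ρ := hδ.trans hδρ
  have hlow : 0 < δ / ρ * Real.exp (ρ * t) := by positivity
  have h1 : (δ / ρ * Real.exp (ρ * t)) ^ 2 ≤ (1 + δ * (Real.exp (ρ * t) - 1) / ρ) ^ 2 :=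
    pow_le_pow_left₀ hlow.le (g_ge hδ hδρ t) 2
  have h2 : Real.exp ((ρ - x) * t) / (1 + δ * (Real.exp (ρ * t) - 1) / ρ) ^ 2
      ≤ Real.exp ((ρ - x) * t) / (δ / ρ * Real.exp (ρ * t)) ^ 2 :=
    div_le_div_of_nonneg_left (Real.exp_pos _).le (by positivity) h1
  refine h2.trans ?_
  have h3 : Real.exp ((ρ - x) * t) / (δ / ρ * Real.exp (ρ * t)) ^ 2
      = (ρ / δ) ^ 2 * Real.exp ((ρ - x) * t - 2 * (ρ * t)) := by
    rw [mul_pow, Real.exp_sub]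
    rw [show Real.exp (ρ * t) ^ 2 = Real.exp (2 * (ρ * t)) by
      rw [two_mul, Real.exp_add, sq]]
    field_simp
  rw [h3]
  have h4 : Real.exp ((ρ - x) * t - 2 * (ρ * t)) ≤ Real.exp (-(ρ * t)) := by
    apply Real.exp_le_exp.2
    nlinarith
  have : (0:ℝ) < (ρ / δ) ^ 2 := by positivity
  nlinarith

private lemma bound_int {δ ρ : ℝ} (hδ : 0 < δ) (hδρ : δ < ρ) :
    IntegrableOn (fun t => (ρ / δ) ^ 2 * Real.exp (-(ρ * t))) (Set.Ioi (0:ℝ)) := by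
  have hρ : 0 < ρ := hδ.trans hδρ
  have := (exp_neg_integrableOn_Ioi 0 hρ).const_mul ((ρ / δ) ^ 2)
  simpa [neg_mul, IntegrableOn] using this

private lemma F_int {δ ρ : ℝ} (hδ : 0 < δ) (hδρ : δ < ρ) {x : ℝ} (hx : 0 ≤ x) :
    IntegrableOn (fun t => Real.exp ((ρ - x) * t) / (1 + δ * (Real.exp (ρ * t) - 1) / ρ) ^ 2)
      (Set.Ioi (0:ℝ)) := by
  apply Integrable.mono' (bound_int hδ hδρ)
  · exact ((F_cont hδ hδρ x).aestronglyMeasurable).restrict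
  · refine (ae_restrict_iff' measurableSet_Ioi).2 (Filter.Eventually.of_forall fun t ht => ?_)
    rw [Real.norm_eq_abs, abs_of_nonneg (F_nonneg hδ hδρ x t)]
    exact F_bound hδ hδρ hx (le_of_lt ht)


private lemma int_x0 {δ ρ : ℝ} (hδ : 0 < δ) (hδρ : δ < ρ) :
    ∫ t in Set.Ioi (0:ℝ), Real.exp (ρ * t) / (1 + δ * (Real.exp (ρ * t) - 1) / ρ) ^ 2 = 1 / δ := by
  have hρ : 0 < ρ := hδ.trans hδρ
  have hderiv : ∀ t ∈ Set.Ici (0:ℝ),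
      HasDerivAt (fun t => -(δ * (1 + δ * (Real.exp (ρ * t) - 1) / ρ))⁻¹)
        (Real.exp (ρ * t) / (1 + δ * (Real.exp (ρ * t) - 1) / ρ) ^ 2) t := by
    intro t _
    have h1 : HasDerivAt (fun t : ℝ => ρ * t) ρ t := by
      simpa using (hasDerivAt_id t).const_mul ρ
    have hg : HasDerivAt (fun t => 1 + δ * (Real.exp (ρ * t) - 1) / ρ) (δ * Real.exp (ρ * t)) t := by
      have := (((h1.exp.sub_const 1).const_mul δ).div_const ρ).const_add 1
      refine HasDerivAt.congr_deriv this ?_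
      rw [mul_div_assoc, mul_div_cancel_right₀ _ hρ.ne']
    have hne : δ * (1 + δ * (Real.exp (ρ * t) - 1) / ρ) ≠ 0 := by
      have := g_pos hδ hδρ t
      positivity
    have h4 := ((hg.const_mul δ).inv hne).neg
    refine HasDerivAt.congr_deriv h4 ?_
    rw [neg_div, neg_neg, mul_pow,
      show δ * (δ * Real.exp (ρ * t)) = δ ^ 2 * Real.exp (ρ * t) by ring,
      mul_div_mul_left _ _ (pow_ne_zero 2 hδ.ne')]
  have hint : IntegrableOn
      (fun t => Real.exp (ρ * t) / (1 + δ * (Real.exp (ρ * t) - 1) / ρ) ^ 2) (Set.Ioi (0:ℝ)) := by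
    have := F_int hδ hδρ (x := 0) le_rfl
    simpa using this
  have htend : Tendsto (fun t => -(δ * (1 + δ * (Real.exp (ρ * t) - 1) / ρ))⁻¹) atTop (𝓝 0) := by
    have hexp : Tendsto (fun t : ℝ => Real.exp (ρ * t)) atTop atTop :=
      Real.tendsto_exp_atTop.comp (tendsto_id.const_mul_atTop hρ)
    have hmul : Tendsto (fun t : ℝ => δ * (δ / ρ) * Real.exp (ρ * t)) atTop atTop :=
      hexp.const_mul_atTop (by positivity)
    have hge : ∀ t : ℝ, δ * (δ / ρ) * Real.exp (ρ * t)
        ≤ δ * (1 + δ * (Real.exp (ρ * t) - 1) / ρ) := by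
      intro t
      have := g_ge hδ hδρ t
      nlinarith
    have hat : Tendsto (fun t => δ * (1 + δ * (Real.exp (ρ * t) - 1) / ρ)) atTop atTop :=
      tendsto_atTop_mono hge hmul
    simpa using hat.inv_tendsto_atTop.neg
  have := integral_Ioi_of_hasDerivAt_of_tendsto' hderiv hint htend
  rw [this]
  norm_num

/-- Existence and uniqueness of the Malthusian parameter: the Laplace transform
`L(x) = (1-p)γ ∫_0^∞ e^{(ρ-x)t}/(1+δ(e^{ρt}-1)/ρ)^2 dt` is continuous and
strictly decreasing on `(0,∞)`, tends to `(1-p)γ/δ > 1` at `0+` and to `0` at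
`∞`, and has a unique root `α` of `L(α) = 1`. -/
theorem malthusian_parameter_exists_unique
    (γ p δ ρ : ℝ) (hγ : 0 < γ) (hp : p ∈ Set.Ioo (0:ℝ) 1) (hδ : 0 < δ)
    (hsup : δ < (1 - p) * γ) (hρ : ρ = δ + p * γ)
    (L : ℝ → ℝ)
    (hL : ∀ x, 0 < x → L x =
      (1 - p) * γ * ∫ t in Set.Ioi (0:ℝ), exp ((ρ - x) * t) / (1 + δ * (exp (ρ * t) - 1) / ρ) ^ 2) :
    ContinuousOn L (Set.Ioi 0) ∧
    StrictAntiOn L (Set.Ioi 0) ∧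
    Tendsto L (nhdsWithin 0 (Set.Ioi 0)) (nhds ((1 - p) * γ / δ)) ∧
    1 < (1 - p) * γ / δ ∧
    Tendsto L atTop (nhds 0) ∧
    ∃! α : ℝ, 0 < α ∧ L α = 1 := by
  obtain ⟨hp0, hp1⟩ := hp
  have h1p : 0 < 1 - p := by linarith
  have hc : 0 < (1 - p) * γ := by positivity
  have hδρ : δ < ρ := by nlinarith [mul_pos hp0 hγ]
  have hρ0 : 0 < ρ := hδ.trans hδρ
  set F : ℝ → ℝ → ℝ :=
    fun x t => Real.exp ((ρ - x) * t) / (1 + δ * (Real.exp (ρ * t) - 1) / ρ) ^ 2 with hF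
  set I : ℝ → ℝ := fun x => ∫ t in Set.Ioi (0:ℝ), F x t with hI
  -- continuity
  have hCont : ContinuousOn L (Set.Ioi 0) := by
    have hcont : ContinuousOn (fun x => (1 - p) * γ * I x) (Set.Ioi 0) := by
      intro x₀ hx₀
      apply ContinuousAt.continuousWithinAt
      refine continuousAt_const.mul ?_
      apply continuousAt_of_dominated (bound := fun t => (ρ / δ) ^ 2 * Real.exp (-(ρ * t)))
      · exact Eventually.of_forall fun x => ((F_cont hδ hδρ x).aestronglyMeasurable).restrict
      · filter_upwards [eventually_gt_nhds hx₀] with x hx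
        refine (ae_restrict_iff' measurableSet_Ioi).2 (Eventually.of_forall fun t ht => ?_)
        rw [Real.norm_eq_abs, abs_of_nonneg (F_nonneg hδ hδρ x t)]
        exact F_bound hδ hδρ hx.le ht.le
      · exact bound_int hδ hδρ
      · refine Eventually.of_forall fun t => ?_
        exact (((continuous_const.sub continuous_id).mul continuous_const).rexp.div_const
          _).continuousAt
    exact hcont.congr fun x hx => hL x hx
  -- strict antitonicity
  have hanti : StrictAntiOn L (Set.Ioi 0) := by
    intro x hx y hy hxy
    simp only [Set.mem_Ioi] at hx hy
    have hix := F_int hδ hδρ (x := x) hx.le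
    have hiy := F_int hδ hδρ (x := y) hy.le
    have hsubpos : 0 < ∫ t in Set.Ioi (0:ℝ), (F x t - F y t) := by
      rw [setIntegral_pos_iff_support_of_nonneg_ae]
      · have hss : Set.Ioi (0:ℝ) ⊆ (Function.support fun t => F x t - F y t) ∩ Set.Ioi 0 := by
          intro t ht
          refine ⟨?_, ht⟩
          simp only [Set.mem_Ioi] at ht
          have hgp : (0:ℝ) < (1 + δ * (Real.exp (ρ * t) - 1) / ρ) ^ 2 := by
            have := g_pos hδ hδρ t; positivity
          have hlt : Real.exp ((ρ - y) * t) < Real.exp ((ρ - x) * t) := by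
            apply Real.exp_lt_exp.2
            nlinarith
          have : F y t < F x t := by
            simp only [hF]
            exact (div_lt_div_iff_of_pos_right hgp).2 hlt
          simp only [Function.mem_support]
          exact sub_ne_zero.2 (ne_of_gt this)
        calc (0:ENNReal) < volume (Set.Ioi (0:ℝ)) := by
              rw [Real.volume_Ioi]; exact ENNReal.zero_lt_top
          _ ≤ _ := measure_mono hss
      · refine (ae_restrict_iff' measurableSet_Ioi).2 (Eventually.of_forall fun t ht => ?_)
        simp only [Set.mem_Ioi] at ht
        have hgp : (0:ℝ) < (1 + δ * (Real.exp (ρ * t) - 1) / ρ) ^ 2 := by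
          have := g_pos hδ hδρ t; positivity
        have hle : Real.exp ((ρ - y) * t) ≤ Real.exp ((ρ - x) * t) := by
          apply Real.exp_le_exp.2
          nlinarith
        have : F y t ≤ F x t := by
          simp only [hF]
          exact (div_le_div_iff_of_pos_right hgp).2 hle
        simpa using sub_nonneg.2 this
      · exact hix.sub hiy
    rw [integral_sub hix hiy] at hsubpos
    rw [hL x hx, hL y hy]
    have : I y < I x := by simp only [hI]; linarith
    exact mul_lt_mul_of_pos_left this hc
  -- limit at 0+
  have hD : 1 < (1 - p) * γ / δ := (one_lt_div hδ).2 hsup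
  have hkeyL : Tendsto L (nhdsWithin 0 (Set.Ioi 0)) (nhds ((1 - p) * γ / δ)) := by
    have hIlim : Tendsto (fun x => I x) (𝓝[>] (0:ℝ)) (𝓝 (1 / δ)) := by
      have h := tendsto_integral_filter_of_dominated_convergence
        (μ := volume.restrict (Set.Ioi (0:ℝ))) (F := fun x t => F x t) (f := fun t => F 0 t)
        (l := 𝓝[>] (0:ℝ)) (fun t => (ρ / δ) ^ 2 * Real.exp (-(ρ * t)))
        (Eventually.of_forall fun x => ((F_cont hδ hδρ x).aestronglyMeasurable).restrict)
        ?_ (bound_int hδ hδρ) ?_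
      · have h0 : (∫ t in Set.Ioi (0:ℝ), F 0 t) = 1 / δ := by
          simpa [hF] using int_x0 hδ hδρ
        rwa [h0] at h
      · filter_upwards [self_mem_nhdsWithin] with x hx
        refine (ae_restrict_iff' measurableSet_Ioi).2 (Eventually.of_forall fun t ht => ?_)
        rw [Real.norm_eq_abs, abs_of_nonneg (F_nonneg hδ hδρ x t)]
        exact F_bound hδ hδρ (le_of_lt hx) ht.le
      · refine Eventually.of_forall fun t => ?_
        apply tendsto_nhdsWithin_of_tendsto_nhds
        exact ((((continuous_const.sub continuous_id).mul continuous_const).rexp.div_const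
          _).continuousAt)
    have h2 := hIlim.const_mul ((1 - p) * γ)
    rw [show (1 - p) * γ * (1 / δ) = (1 - p) * γ / δ by ring] at h2
    refine Tendsto.congr' ?_ h2
    filter_upwards [self_mem_nhdsWithin] with x hx
    exact (hL x hx).symm
  -- limit at infinity
  have htop : Tendsto L atTop (𝓝 (0:ℝ)) := by
    have hupper : ∀ᶠ x in atTop, L x ≤ (1 - p) * γ * (1 / (x - ρ)) := by
      filter_upwards [eventually_gt_atTop (ρ + 1), eventually_gt_atTop 0] with x hx hx0
      rw [hL x hx0]
      have hxρ : 0 < x - ρ := by linarith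
      have hmono : (∫ t in Set.Ioi (0:ℝ), F x t)
          ≤ ∫ t in Set.Ioi (0:ℝ), Real.exp (-((x - ρ) * t)) := by
        apply setIntegral_mono_on (F_int hδ hδρ hx0.le)
          ((exp_neg_integrableOn_Ioi 0 hxρ).congr_fun (fun t _ => by simp only [neg_mul]) measurableSet_Ioi) measurableSet_Ioi
        intro t ht
        simp only [Set.mem_Ioi] at ht
        have h1 : (1:ℝ) ≤ Real.exp (ρ * t) := Real.one_le_exp (by positivity)
        have hg1 : (1:ℝ) ≤ (1 + δ * (Real.exp (ρ * t) - 1) / ρ) ^ 2 := by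
          have h2 : (0:ℝ) ≤ δ * (Real.exp (ρ * t) - 1) / ρ :=
            div_nonneg (mul_nonneg hδ.le (by linarith)) hρ0.le
          nlinarith
        calc F x t ≤ Real.exp ((ρ - x) * t) / 1 :=
              div_le_div_of_nonneg_left (Real.exp_pos _).le one_pos hg1
          _ = Real.exp (-((x - ρ) * t)) := by rw [div_one]; congr 1; ring
      rw [exp_int hxρ] at hmono
      exact mul_le_mul_of_nonneg_left hmono hc.le
    have hlower : ∀ᶠ x in atTop, 0 ≤ L x := by
      filter_upwards [eventually_gt_atTop 0] with x hx
      rw [hL x hx]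
      exact mul_nonneg hc.le (setIntegral_nonneg measurableSet_Ioi fun t _ =>
        F_nonneg hδ hδρ x t)
    have hlim : Tendsto (fun x : ℝ => (1 - p) * γ * (1 / (x - ρ))) atTop (𝓝 0) := by
      have h5 : Tendsto (fun x : ℝ => (1:ℝ) / (x - ρ)) atTop (𝓝 0) :=
        Tendsto.div_atTop tendsto_const_nhds (tendsto_atTop_add_const_right atTop (-ρ)
          tendsto_id |>.congr fun x => by simp only [id_eq]; ring)
      have h6 := h5.const_mul ((1 - p) * γ)
      rw [mul_zero] at h6
      exact h6
    exact squeeze_zero' hlower hupper hlim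
  refine ⟨hCont, hanti, hkeyL, hD, htop, ?_⟩
  -- existence and uniqueness
  obtain ⟨a, ha1, ha0⟩ := ((hkeyL.eventually (eventually_gt_nhds hD)).and
    self_mem_nhdsWithin).exists
  obtain ⟨b, hb1, hab⟩ := ((htop.eventually (eventually_lt_nhds one_pos)).and
    (eventually_gt_atTop a)).exists
  have hsub : Set.Icc a b ⊆ Set.Ioi (0:ℝ) := fun t ht => lt_of_lt_of_le ha0 ht.1
  obtain ⟨α, hαmem, hαeq⟩ := intermediate_value_Icc' hab.le (hCont.mono hsub)
    ⟨hb1.le, ha1.le⟩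
  have hα0 : 0 < α := lt_of_lt_of_le ha0 hαmem.1
  refine ⟨α, ⟨hα0, hαeq⟩, ?_⟩
  rintro β ⟨hβ0, hβeq⟩
  exact hanti.injOn hβ0 hα0 (by rw [hβeq, hαeq])
end
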